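/- arXiv:0912.2342 — 2 statements merged into one kernel-verified Lean document; each statement's English description precedes it below -/
import Mathlib

section
/- Let F_q be a finite field with q elements and let n ≥ 1 be odd, α ∈ F_q^* with α ≠ (-1)^{(n+1)/2}. Then the number N_{A_n}(α) of solutions in F_q^{2n} of the type A_n system with first coefficient α and all others 1 equals (q^{(n+1)/2} - 1)(q^{(n+3)/2} - 1)/(q² - 1). -/
/-- Extension of `x : Fin n → F` to all of `ℕ`, with value `1` outside `{1, …, n}`
(1-indexed: `extA x k = x (k-1)` for `1 ≤ k ≤ n`). -/
def extA {F : Type*} [One F] {n : ℕ} (x : Fin n → F) (k : ℕ) : F :=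
  if h : 1 ≤ k ∧ k ≤ n then x ⟨k - 1, by omega⟩ else 1

/-- Number of points over `F` of the type `Aₙ` variety `X_{Aₙ}(α, 1, …, 1)`:
solutions of `xₖ xₖ' = 1 + cₖ x_{k-1} x_{k+1}` with `c₁ = α`, `cₖ = 1` otherwise,
and the convention `x₀ = x_{n+1} = 1`. -/
noncomputable def NA (F : Type*) [Field F] (n : ℕ) (α : F) : ℕ :=
  Nat.card {p : (Fin n → F) × (Fin n → F) //
    ∀ k, 1 ≤ k → k ≤ n →
      extA p.1 k * extA p.2 k =
        1 + (if k = 1 then α else 1) * extA p.1 (k - 1) * extA p.1 (k + 1)}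

section Aux

variable {F : Type*} [Field F]

def SolCond (n : ℕ) (α : F) (x x' : Fin n → F) : Prop :=
  ∀ k, 1 ≤ k → k ≤ n →
    extA x k * extA x' k =
      1 + (if k = 1 then α else 1) * extA x (k - 1) * extA x (k + 1)

def Sol (F : Type*) [Field F] (n : ℕ) (α : F) :=
  {p : (Fin n → F) × (Fin n → F) // SolCond n α p.1 p.2}

lemma NA_eq_card (n : ℕ) (α : F) : NA F n α = Nat.card (Sol F n α) := rfl

instance [Finite F] (n : ℕ) (α : F) : Finite (Sol F n α) :=
  Subtype.finite

lemma extA_eq_one {n k : ℕ} (x : Fin n → F) (h : ¬(1 ≤ k ∧ k ≤ n)) : extA x k = 1 :=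
  dif_neg h

lemma extA_pos {n k : ℕ} (x : Fin n → F) (h1 : 1 ≤ k) (h2 : k ≤ n) :
    extA x k = x ⟨k - 1, by omega⟩ :=
  dif_pos ⟨h1, h2⟩

lemma extA_one {n : ℕ} (x : Fin (n + 1) → F) : extA x 1 = x 0 := by
  rw [extA_pos x le_rfl (by omega)]
  exact congrArg x (by ext; simp)

lemma extA_tail {n : ℕ} (x : Fin (n + 1) → F) {j : ℕ} (hj : 1 ≤ j) :
    extA (x ∘ Fin.succ) j = extA x (j + 1) := by
  by_cases h : j ≤ n
  · rw [extA_pos _ hj h, extA_pos x (by omega) (by omega)]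
    show x (Fin.succ ⟨j - 1, _⟩) = _
    exact congrArg x (by ext; simp [Fin.val_succ]; omega)
  · rw [extA_eq_one _ (by omega), extA_eq_one _ (by omega)]

lemma cons_comp_succ {n : ℕ} (s : F) (y : Fin n → F) :
    (Fin.cons s y : Fin (n + 1) → F) ∘ Fin.succ = y :=
  funext fun i => by simp

lemma solCond_succ_iff {n : ℕ} (α : F) (x x' : Fin (n + 1) → F) :
    SolCond (n + 1) α x x' ↔
      (x 0 * x' 0 = 1 + α * extA (x ∘ Fin.succ) 1) ∧
        SolCond n (x 0) (x ∘ Fin.succ) (x' ∘ Fin.succ) := by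
  constructor
  · intro h
    constructor
    · have h1 := h 1 le_rfl (by omega)
      rw [extA_one x, extA_one x', extA_eq_one (k := 1 - 1) x (by omega),
        ← extA_tail x le_rfl] at h1
      rw [if_pos rfl] at h1
      linear_combination h1
    · intro j hj1 hjn
      have h2 := h (j + 1) (by omega) (by omega)
      rw [if_neg (by omega), Nat.add_sub_cancel] at h2
      rw [extA_tail x hj1, extA_tail x' hj1, extA_tail x (by omega : 1 ≤ j + 1)]
      rcases eq_or_ne j 1 with rfl | hj
      · rw [if_pos rfl, extA_eq_one (k := 1 - 1) (x ∘ Fin.succ) (by omega)]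
        rw [extA_one x] at h2
        linear_combination h2
      · have e : extA (x ∘ Fin.succ) (j - 1) = extA x j := by
          rw [extA_tail x (by omega : 1 ≤ j - 1), Nat.sub_add_cancel hj1]
        rw [if_neg hj, e]
        linear_combination h2
  · rintro ⟨hh, ht⟩ k hk1 hkn
    obtain ⟨j, rfl⟩ : ∃ j, k = j + 1 := ⟨k - 1, by omega⟩
    rcases Nat.eq_zero_or_pos j with rfl | hj
    · simp only [Nat.zero_add]
      rw [if_pos trivial, extA_one x, extA_one x', extA_eq_one (k := 1 - 1) x (by omega),
        ← extA_tail x (le_rfl : 1 ≤ 1)]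
      linear_combination hh
    · have hkey := ht j hj (by omega)
      rw [if_neg (by omega), Nat.add_sub_cancel]
      rw [extA_tail x hj, extA_tail x' hj, extA_tail x (by omega : 1 ≤ j + 1)] at hkey
      rcases eq_or_ne j 1 with rfl | hj'
      · rw [if_pos rfl, extA_eq_one (k := 1 - 1) (x ∘ Fin.succ) (by omega)] at hkey
        rw [extA_one x]
        linear_combination hkey
      · have e : extA (x ∘ Fin.succ) (j - 1) = extA x j := by
          rw [extA_tail x (by omega : 1 ≤ j - 1), Nat.sub_add_cancel hj]
        rw [if_neg hj', e] at hkey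
        linear_combination hkey

def InnerA (F : Type*) [Field F] (n : ℕ) (α s : F) :=
  {w : F × ((Fin n → F) × (Fin n → F)) //
    SolCond n s w.2.1 w.2.2 ∧ s * w.1 = 1 + α * extA w.2.1 1}

instance [Finite F] (n : ℕ) (α s : F) : Finite (InnerA F n α s) :=
  Subtype.finite

/-- The fiber of `Sol F (n+1) α` over first coordinate `s`. -/
def innerEquiv (n : ℕ) (α s : F) :
    {p : Sol F (n + 1) α // p.1.1 0 = s} ≃ InnerA F n α s where
  toFun p := ⟨(p.1.1.2 0, (p.1.1.1 ∘ Fin.succ, p.1.1.2 ∘ Fin.succ)), by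
    have h := (solCond_succ_iff α p.1.1.1 p.1.1.2).mp p.1.2
    rw [p.2] at h
    exact ⟨h.2, by linear_combination h.1⟩⟩
  invFun w := ⟨⟨(Fin.cons s w.1.2.1, Fin.cons w.1.1 w.1.2.2), by
      apply (solCond_succ_iff α _ _).mpr
      dsimp only
      rw [cons_comp_succ, cons_comp_succ, Fin.cons_zero, Fin.cons_zero]
      exact ⟨by linear_combination w.2.2, w.2.1⟩⟩, by simp⟩
  left_inv p := by
    obtain ⟨⟨⟨x, x'⟩, hp⟩, hs⟩ := p
    apply Subtype.ext
    apply Subtype.ext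
    simp only at hs ⊢
    refine Prod.ext ?_ ?_
    · rw [← hs]; exact Fin.cons_self_tail x
    · exact Fin.cons_self_tail x'
  right_inv w := by
    obtain ⟨⟨t, y, y'⟩, hw⟩ := w
    apply Subtype.ext
    simp [cons_comp_succ]

def innerNeZeroEquiv (n : ℕ) (α : F) {s : F} (hs : s ≠ 0) :
    InnerA F n α s ≃ Sol F n s where
  toFun w := ⟨w.1.2, w.2.1⟩
  invFun y := ⟨(s⁻¹ * (1 + α * extA y.1.1 1), y.1), y.2, by field_simp⟩
  left_inv w := by
    obtain ⟨⟨t, y, y'⟩, h1, h2⟩ := w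
    apply Subtype.ext
    refine Prod.ext ?_ rfl
    have h2' : s * t = 1 + α * extA y 1 := h2
    simp only
    field_simp
    linear_combination -h2'
  right_inv y := rfl

def innerZeroEquiv (n : ℕ) {α : F} (hα : α ≠ 0) :
    InnerA F n α 0 ≃ F × {y : Sol F n 0 // extA y.1.1 1 = -α⁻¹} where
  toFun w := (w.1.1, ⟨⟨w.1.2, w.2.1⟩, by
    have h := w.2.2
    rw [zero_mul] at h
    field_simp
    linear_combination -h⟩)
  invFun z := ⟨(z.1, z.2.1.1), z.2.1.2, by
    rw [show extA z.2.1.1.1 1 = -α⁻¹ from z.2.2]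
    field_simp; ring⟩
  left_inv w := rfl
  right_inv z := rfl

def tfixEquiv (m : ℕ) {u : F} (hu : u ≠ 0) :
    {y : Sol F (m + 1) (0:F) // extA y.1.1 1 = u} ≃ Sol F m u where
  toFun z := ⟨(z.1.1.1 ∘ Fin.succ, z.1.1.2 ∘ Fin.succ), by
    have h := (solCond_succ_iff (0:F) z.1.1.1 z.1.1.2).mp z.1.2
    have hz : z.1.1.1 0 = u := by rw [← extA_one z.1.1.1]; exact z.2
    rw [hz] at h
    exact h.2⟩
  invFun y := ⟨⟨(Fin.cons u y.1.1, Fin.cons u⁻¹ y.1.2), by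
      apply (solCond_succ_iff (0:F) _ _).mpr
      dsimp only
      rw [cons_comp_succ, cons_comp_succ, Fin.cons_zero, Fin.cons_zero]
      exact ⟨by field_simp; ring, y.2⟩⟩, by
    rw [extA_one]; simp⟩
  left_inv z := by
    obtain ⟨⟨⟨x, x'⟩, hp⟩, hz⟩ := z
    have hx0 : x 0 = u := by rw [← extA_one x]; exact hz
    have hx0' : x' 0 = u⁻¹ := by
      have h := ((solCond_succ_iff (0:F) x x').mp hp).1
      rw [hx0] at h
      have h' : u * x' 0 = 1 := by linear_combination h
      exact eq_inv_of_mul_eq_one_right h'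
    apply Subtype.ext
    apply Subtype.ext
    refine Prod.ext ?_ ?_
    · simp only; rw [← hx0]; exact Fin.cons_self_tail x
    · simp only; rw [← hx0']; exact Fin.cons_self_tail x'
  right_inv y := by
    apply Subtype.ext
    simp [cons_comp_succ]

lemma natCard_sigma {ι : Type*} [Fintype ι] (f : ι → Type*) [∀ i, Finite (f i)] :
    Nat.card (Σ i, f i) = ∑ i, Nat.card (f i) := by
  classical
  have := fun i => Fintype.ofFinite (f i)
  simp [Nat.card_eq_fintype_card, Fintype.card_sigma]

variable [Fintype F]

lemma card_fiber_split (n : ℕ) (α : F) :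
    NA F (n + 1) α = ∑ s : F, Nat.card (InnerA F n α s) := by
  classical
  rw [NA_eq_card,
    ← Nat.card_congr (Equiv.sigmaFiberEquiv (fun p : Sol F (n + 1) α => p.1.1 0)),
    natCard_sigma]
  exact Finset.sum_congr rfl fun s _ => Nat.card_congr (innerEquiv n α s)

lemma step [DecidableEq F] (n : ℕ) {α : F} (hα : α ≠ 0) :
    NA F (n + 1) α =
      Fintype.card F * Nat.card {y : Sol F n (0:F) // extA y.1.1 1 = -α⁻¹}
        + ∑ s ∈ Finset.univ.erase (0 : F), NA F n s := by
  classical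
  rw [card_fiber_split, ← Finset.add_sum_erase _ _ (Finset.mem_univ (0 : F))]
  congr 1
  · rw [Nat.card_congr (innerZeroEquiv n hα), Nat.card_prod, Nat.card_eq_fintype_card]
  · exact Finset.sum_congr rfl fun s hs =>
      (Nat.card_congr (innerNeZeroEquiv n α (Finset.ne_of_mem_erase hs))).trans
        (NA_eq_card n s).symm

instance (β : F) : Unique (Sol F 0 β) where
  default := ⟨(Fin.elim0, Fin.elim0), fun k h1 h2 => by omega⟩
  uniq p := by
    apply Subtype.ext
    refine Prod.ext (funext fun i => i.elim0) (funext fun i => i.elim0)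

lemma NA_zero (β : F) : NA F 0 β = 1 := by
  rw [NA_eq_card]; exact Nat.card_unique

lemma tfix_card (m : ℕ) {u : F} (hu : u ≠ 0) :
    Nat.card {y : Sol F (m + 1) (0:F) // extA y.1.1 1 = u} = NA F m u :=
  (Nat.card_congr (tfixEquiv m hu)).trans (NA_eq_card m u).symm

lemma tfix_card_zero [DecidableEq F] (u : F) :
    Nat.card {y : Sol F 0 (0:F) // extA y.1.1 1 = u} = if u = 1 then 1 else 0 := by
  have e : ∀ y : Sol F 0 (0:F), extA y.1.1 1 = 1 := fun y => extA_eq_one _ (by omega)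
  split
  · next h =>
    subst h
    rw [Nat.card_congr (Equiv.subtypeUnivEquiv e)]
    exact Nat.card_unique
  · next h =>
    have : IsEmpty {y : Sol F 0 (0:F) // extA y.1.1 1 = u} :=
      ⟨fun y => h (by rw [← y.2, e])⟩
    exact Nat.card_of_isEmpty

lemma step2 [DecidableEq F] (k : ℕ) {α : F} (hα : α ≠ 0) :
    NA F (k + 2) α = Fintype.card F * NA F k (-α⁻¹)
      + ∑ s ∈ Finset.univ.erase (0 : F), NA F (k + 1) s := by
  rw [show k + 2 = (k + 1) + 1 from rfl, step (k + 1) hα, tfix_card k (by simp [hα])]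

lemma NA_one [DecidableEq F] {α : F} (hα : α ≠ 0) :
    NA F 1 α = (if α = -1 then Fintype.card F else 0) + (Fintype.card F - 1) := by
  rw [show (1:ℕ) = 0 + 1 from rfl, step 0 hα, tfix_card_zero]
  have hiff : (-α⁻¹ = 1) ↔ (α = -1) := by
    rw [neg_eq_iff_eq_neg, inv_eq_iff_eq_inv, inv_neg, inv_one]
  have hsum : ∑ s ∈ Finset.univ.erase (0:F), NA F 0 s = Fintype.card F - 1 := by
    rw [Finset.sum_congr rfl (fun s _ => NA_zero s), Finset.sum_const, smul_eq_mul, mul_one,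
      Finset.card_erase_of_mem (Finset.mem_univ _), Finset.card_univ]
  rw [hsum, if_congr hiff rfl rfl, mul_ite, mul_one, mul_zero]

lemma mainA [DecidableEq F] (t : ℕ) :
    (∀ α : F, α ≠ 0 → (NA F (2*t) α : ℤ) * ((Fintype.card F : ℤ)^2 - 1) =
        (Fintype.card F : ℤ)^(2*t+2) - 1) ∧
    (∀ α : F, α ≠ 0 → (NA F (2*t+1) α : ℤ) * ((Fintype.card F : ℤ)^2 - 1) =
        ((Fintype.card F : ℤ)^(t+1) - 1) * ((Fintype.card F : ℤ)^(t+2) - 1) +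
          (if α = (-1)^(t+1) then (Fintype.card F : ℤ)^(t+1) * ((Fintype.card F : ℤ)^2 - 1)
            else 0)) := by
  have hq1 : 1 ≤ Fintype.card F := Fintype.card_pos
  set q : ℤ := (Fintype.card F : ℤ) with hqdef
  induction t with
  | zero =>
    constructor
    · intro α hα
      rw [show 2*0 = 0 from rfl, NA_zero]
      push_cast; ring
    · intro α hα
      simp only [zero_add, pow_one, Nat.mul_zero, Nat.zero_add]
      rw [NA_one hα]
      rcases eq_or_ne α (-1) with h | h
      · rw [if_pos h, if_pos h]
        push_cast [Nat.cast_sub hq1]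
        ring
      · rw [if_neg h, if_neg h]
        push_cast [Nat.cast_sub hq1]
        ring
  | succ t ih =>
    obtain ⟨ihe, iho⟩ := ih
    have hmem : ((-1:F)^(t+1)) ∈ Finset.univ.erase (0:F) :=
      Finset.mem_erase.mpr ⟨pow_ne_zero _ (neg_ne_zero.mpr one_ne_zero), Finset.mem_univ _⟩
    have hsumodd : (∑ s ∈ Finset.univ.erase (0:F), (NA F (2*t+1) s : ℤ)) * (q^2-1)
        = (q - 1) * ((q^(t+1)-1)*(q^(t+2)-1)) + q^(t+1)*(q^2-1) := by
      rw [Finset.sum_mul,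
        Finset.sum_congr rfl (fun s hs => iho s (Finset.ne_of_mem_erase hs)),
        Finset.sum_add_distrib, Finset.sum_const,
        Finset.card_erase_of_mem (Finset.mem_univ _), Finset.card_univ,
        Finset.sum_ite_eq' _ ((-1:F)^(t+1)) _, if_pos hmem, nsmul_eq_mul,
        Nat.cast_sub hq1]
      push_cast
      ring
    have heven : ∀ α : F, α ≠ 0 → (NA F (2*(t+1)) α : ℤ) * (q^2-1) = q^(2*(t+1)+2) - 1 := by
      intro α hα
      rw [show 2*(t+1) = 2*t+2 from by ring, step2 (2*t) hα]
      push_cast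
      rw [add_mul, mul_assoc, ihe (-α⁻¹) (by simp [hα]), hsumodd]
      ring
    refine ⟨heven, ?_⟩
    intro α hα
    have hsumeven : (∑ s ∈ Finset.univ.erase (0:F), (NA F (2*t+2) s : ℤ)) * (q^2-1)
        = (q - 1) * (q^(2*t+4)-1) := by
      have hterm : ∀ s ∈ Finset.univ.erase (0:F),
          (NA F (2*t+2) s : ℤ) * (q^2-1) = q^(2*t+4)-1 := by
        intro s hs
        have h := heven s (Finset.ne_of_mem_erase hs)
        rw [show 2*(t+1) = 2*t+2 from by ring, show 2*t+2+2 = 2*t+4 from by ring] at h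
        exact h
      rw [Finset.sum_mul, Finset.sum_congr rfl hterm, Finset.sum_const,
        Finset.card_erase_of_mem (Finset.mem_univ _), Finset.card_univ,
        nsmul_eq_mul, Nat.cast_sub hq1]
      push_cast
      ring
    have hiff : ((-α⁻¹ : F) = (-1)^(t+1)) ↔ (α = (-1)^(t+1+1)) := by
      rw [show ((-1:F)^(t+1)) = -(-1)^(t+1+1) from by rw [pow_succ]; ring,
        neg_eq_iff_eq_neg, neg_neg, inv_eq_iff_eq_inv, ← inv_pow, inv_neg, inv_one]
    have hrec := step2 (2*t+1) (α := α) hα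
    rw [show 2*t+1+2 = 2*(t+1)+1 from by ring] at hrec
    rw [hrec]
    push_cast
    rw [add_mul, mul_assoc, iho (-α⁻¹) (by simp [hα]), hsumeven]
    rw [show 2*t+1+1 = 2*t+2 from by ring] at *
    rw [mul_add, mul_ite, if_congr hiff rfl rfl]
    rcases eq_or_ne α ((-1:F)^(t+1+1)) with h | h
    · rw [if_pos h, if_pos h]; ring
    · rw [if_neg h, if_neg h]; ring

end Aux

theorem stmt_9 (F : Type*) [Field F] [Fintype F] (n : ℕ) (hn : 1 ≤ n) (hodd : Odd n)
    (α : F) (hα : α ≠ 0) (hα' : α ≠ (-1) ^ ((n + 1) / 2)) :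
    (NA F n α : ℤ) * ((Fintype.card F : ℤ) ^ 2 - 1) =
      ((Fintype.card F : ℤ) ^ ((n + 1) / 2) - 1) *
        ((Fintype.card F : ℤ) ^ ((n + 3) / 2) - 1) := by
  classical
  obtain ⟨t, rfl⟩ := hodd
  have e1 : (2 * t + 1 + 1) / 2 = t + 1 := by omega
  have e2 : (2 * t + 1 + 3) / 2 = t + 2 := by omega
  rw [e1] at hα'
  rw [e1, e2]
  have h := (mainA t).2 α hα
  rw [if_neg hα', add_zero] at h
  exact h
end

section
/- Let F_q be a finite field, n ≥ 4 even, and α, β ∈ F_q^* with α ≠ β, α ≠ (-1)^{n/2}, β ≠ (-1)^{n/2}. The number of solutions in F_q^{2n} of the type D_n system x₁x₁' = 1 + α x₃, x₂x₂' = 1 + β x₃, x₃x₃' = 1 + x₁x₂x₄, x_i x_i' = 1 + x_{i-1}x_{i+1} (4 ≤ i ≤ n-1), x_n x_n' = 1 + x_{n-1} equals (q^{n/2} - 1)². -/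
open Finset
set_option linter.unusedSectionVars false


/-- Number of points over `F` of the type `Dₙ` variety `X_{Dₙ}(α, β, 1, …, 1)`:
`x₁x₁' = 1 + α x₃`, `x₂x₂' = 1 + β x₃`, `x₃x₃' = 1 + x₁x₂x₄`,
`xₖxₖ' = 1 + x_{k-1}x_{k+1}` for `4 ≤ k ≤ n-1`, `xₙxₙ' = 1 + x_{n-1}`,
with the convention `x_{n+1} = 1`. -/
noncomputable def ND (F : Type*) [Field F] (n : ℕ) (α β : F) : ℕ :=
  Nat.card {p : (Fin n → F) × (Fin n → F) //
    ∀ k, 1 ≤ k → k ≤ n →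
      extA p.1 k * extA p.2 k =
        if k = 1 then 1 + α * extA p.1 3
        else if k = 2 then 1 + β * extA p.1 3
        else if k = 3 then 1 + extA p.1 1 * extA p.1 2 * extA p.1 4
        else 1 + extA p.1 (k - 1) * extA p.1 (k + 1)}

section Aux

variable {F : Type*} [Field F] [Fintype F]

lemma extA_val {n : ℕ} (x : Fin n → F) (i : Fin n) : extA x (i.1 + 1) = x i := by
  rw [extA, dif_pos ⟨by omega, by omega⟩]
  exact congrArg x (Fin.ext (by simp))

lemma extA_of_gt {n : ℕ} (x : Fin n → F) {k : ℕ} (h : n < k) : extA x k = 1 := by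
  rw [extA, dif_neg (by omega)]

lemma extA_zero {n : ℕ} (x : Fin n → F) : extA x 0 = 1 := by
  rw [extA, dif_neg (by omega)]

open Classical in
/-- weight: number of solutions `t` of `a * t = c`. -/
noncomputable def wt (a c : F) : ℕ :=
  if a = 0 then (if c = 0 then Fintype.card F else 0) else 1

lemma card_sol (a c : F) : Nat.card {t : F // a * t = c} = wt a c := by
  classical
  rcases eq_or_ne a 0 with rfl | ha
  · rcases eq_or_ne c 0 with rfl | hc
    · rw [wt, if_pos rfl, if_pos rfl,
        Nat.card_congr (Equiv.subtypeUnivEquiv (fun t => by simp)), Nat.card_eq_fintype_card]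
    · have : IsEmpty {t : F // (0:F) * t = c} :=
        ⟨by rintro ⟨t, ht⟩; rw [zero_mul] at ht; exact hc ht.symm⟩
      rw [Nat.card_of_isEmpty, wt, if_pos rfl, if_neg hc]
  · have : Unique {t : F // a * t = c} := by
      refine ⟨⟨⟨a⁻¹ * c, by field_simp⟩⟩, ?_⟩
      rintro ⟨t, ht⟩
      ext
      field_simp
      rw [mul_comm] at ht
      exact eq_div_of_mul_eq ha ht
    rw [Nat.card_unique, wt, if_neg ha]

/-- the right-hand sides of the system. -/
noncomputable def rhs (α β : F) {n : ℕ} (x : Fin n → F) (k : ℕ) : F :=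
  if k = 1 then 1 + α * extA x 3
  else if k = 2 then 1 + β * extA x 3
  else if k = 3 then 1 + extA x 1 * extA x 2 * extA x 4
  else 1 + extA x (k - 1) * extA x (k + 1)

lemma nat_card_sigma {ι : Type*} [Fintype ι] (β : ι → Type*) [∀ i, Fintype (β i)] :
    Nat.card ((i : ι) × β i) = ∑ i, Nat.card (β i) := by
  simp [Nat.card_eq_fintype_card, Fintype.card_sigma]

lemma ND_eq_sum (n : ℕ) (α β : F) :
    ND F n α β = ∑ x : Fin n → F, ∏ k ∈ Finset.range n, wt (extA x (k+1)) (rhs α β x (k+1)) := by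
  classical
  have e1 : {p : (Fin n → F) × (Fin n → F) //
      ∀ k, 1 ≤ k → k ≤ n →
      extA p.1 k * extA p.2 k = rhs α β p.1 k} ≃
      (x : Fin n → F) × {y : Fin n → F // ∀ i : Fin n, extA x (i.1+1) * y i = rhs α β x (i.1+1)} := by
    refine ⟨fun p => ⟨p.1.1, p.1.2, ?_⟩, fun s => ⟨(s.1, s.2.1), ?_⟩, fun p => rfl, fun s => rfl⟩
    · intro i
      rw [← extA_val p.1.2 i]
      exact p.2 (i.1+1) (by omega) (by omega)
    · intro k hk1 hkn
      show extA s.1 k * extA s.2.1 k = rhs α β s.1 k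
      have h := s.2.2 ⟨k - 1, by omega⟩
      rw [extA_val] at h
      simp only [Fin.val_mk] at h
      rw [show k - 1 + 1 = k from by omega] at h
      rw [show extA s.1 k = s.1 ⟨k-1, by omega⟩ from dif_pos ⟨hk1, hkn⟩,
        show extA s.2.1 k = s.2.1 ⟨k-1, by omega⟩ from dif_pos ⟨hk1, hkn⟩]
      exact h
  have step1 : ND F n α β = Nat.card {p : (Fin n → F) × (Fin n → F) //
      ∀ k, 1 ≤ k → k ≤ n → extA p.1 k * extA p.2 k = rhs α β p.1 k} := rfl
  rw [step1, Nat.card_congr e1, nat_card_sigma]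
  refine Finset.sum_congr rfl (fun x _ => ?_)
  rw [Nat.card_congr (Equiv.subtypePiEquivPi
    (p := fun (i : Fin n) (c : F) => extA x (i.1+1) * c = rhs α β x (i.1+1))), Nat.card_pi]
  rw [← Fin.prod_univ_eq_prod_range (fun k => wt (extA x (k+1)) (rhs α β x (k+1))) n]
  exact Finset.prod_congr rfl (fun i _ => card_sol _ _)

end Aux

section Chain

variable {F : Type*} [Field F] [Fintype F]

lemma extA_cons_one {k : ℕ} (b : F) (z : Fin k → F) : extA (Fin.cons b z) 1 = b := by
  rw [extA, dif_pos ⟨le_refl 1, by omega⟩]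
  exact Fin.cons_zero (α := fun _ => F) b z

lemma extA_cons {k : ℕ} (b : F) (z : Fin k → F) {j : ℕ} (hj : 1 ≤ j) :
    extA (Fin.cons b z) (j+1) = extA z j := by
  by_cases hle : j ≤ k
  · rw [extA, dif_pos ⟨by omega, by omega⟩, extA, dif_pos ⟨hj, hle⟩]
    have hfin : (⟨j + 1 - 1, by omega⟩ : Fin (k+1)) = Fin.succ ⟨j - 1, by omega⟩ :=
      Fin.ext (by simp; omega)
    rw [hfin, Fin.cons_succ]
  · rw [extA, dif_neg (by omega), extA, dif_neg (by omega)]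

/-- neighbor value: `a` at position 0, `extA z k` else (so `1` beyond `r`). -/
noncomputable def nb (a : F) {r : ℕ} (z : Fin r → F) (k : ℕ) : F :=
  if k = 0 then a else extA z k

noncomputable def chainW (a : F) {r : ℕ} (z : Fin r → F) (k : ℕ) : ℕ :=
  wt (extA z k) (1 + nb a z (k-1) * nb a z (k+1))

noncomputable def CP (a : F) {r : ℕ} (z : Fin r → F) : ℕ :=
  ∏ j ∈ Finset.range r, chainW a z (j+1)

noncomputable def SC (F : Type*) [Field F] [Fintype F] (r : ℕ) (a : F) : ℕ :=
  ∑ z : Fin r → F, CP a z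

lemma chainW_cons (a b : F) {r : ℕ} (z : Fin r → F) {j : ℕ} (hj : 1 ≤ j) :
    chainW a (Fin.cons b z) (j+1) = chainW b z j := by
  have eL : nb a (Fin.cons b z) (j+1-1) = nb b z (j-1) := by
    rcases Nat.eq_or_lt_of_le hj with h1 | h2
    · rw [← h1]
      rw [show (1:ℕ)+1-1 = 1 from rfl, show (1:ℕ)-1 = 0 from rfl, nb, if_neg one_ne_zero,
        nb, if_pos rfl, extA_cons_one]
    · rw [nb, if_neg (by omega), nb, if_neg (by omega),
        show j + 1 - 1 = (j - 1) + 1 from by omega, extA_cons b z (by omega)]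
  have eR : nb a (Fin.cons b z) (j+1+1) = nb b z (j+1) := by
    rw [nb, if_neg (by omega), nb, if_neg (by omega), extA_cons b z (by omega)]
  rw [chainW, chainW, extA_cons b z hj, eL, eR]

lemma CP_cons (a b : F) {r : ℕ} (z : Fin r → F) :
    CP a (Fin.cons b z) = wt b (1 + a * extA z 1) * CP b z := by
  rw [CP, Finset.prod_range_succ']
  have h1 : ∀ j ∈ Finset.range r, chainW a (Fin.cons b z) (j + 1 + 1) = chainW b z (j+1) :=
    fun j _ => chainW_cons a b z (by omega)
  rw [Finset.prod_congr rfl h1]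
  have h2 : chainW a (Fin.cons b z) (0 + 1) = wt b (1 + a * extA z 1) := by
    rw [chainW]
    have e1 : extA (Fin.cons b z) (0+1) = b := extA_cons_one b z
    have e2 : nb a (Fin.cons b z) (0 + 1 - 1) = a := by rw [nb]; simp
    have e3 : nb a (Fin.cons b z) (0 + 1 + 1) = extA z 1 := by
      rw [nb, if_neg (by omega)]
      exact extA_cons b z (le_refl 1)
    rw [e1, e2, e3]
  rw [h2, mul_comm, CP]

lemma sum_cons_split {M : Type*} [AddCommMonoid M] (r : ℕ) (f : (Fin (r+1) → F) → M) :
    ∑ y : Fin (r+1) → F, f y = ∑ b : F, ∑ z : Fin r → F, f (Fin.cons b z) := by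
  rw [← Equiv.sum_comp (Fin.consEquiv (fun _ => F)) f, Fintype.sum_prod_type]
  rfl

lemma SC_zero (a : F) : SC F 0 a = 1 := by
  rw [SC]
  rw [show (∑ z : Fin 0 → F, CP a z) = ∑ z : Fin 0 → F, 1 from by
    refine Finset.sum_congr rfl fun z _ => ?_
    rw [CP]; simp]
  simp

open Classical in
lemma sum_wt (c : F) :
    ∑ b : F, wt b c = (Fintype.card F - 1) + (if c = 0 then Fintype.card F else 0) := by
  classical
  rw [← Finset.add_sum_erase Finset.univ _ (Finset.mem_univ (0:F))]
  have h1 : ∀ b ∈ Finset.univ.erase (0:F), wt b c = 1 := by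
    intro b hb
    rw [wt, if_neg (Finset.mem_erase.1 hb).1]
  rw [Finset.sum_congr rfl h1, Finset.sum_const, smul_eq_mul, mul_one,
    Finset.card_erase_of_mem (Finset.mem_univ _), Finset.card_univ, wt, if_pos rfl]
  omega

open Classical in
lemma SC_one (a : F) :
    SC F 1 a = (Fintype.card F - 1) + (if a = -1 then Fintype.card F else 0) := by
  classical
  rw [SC]
  have key : ∀ z : Fin 1 → F, CP a z = wt (z 0) (1 + a) := by
    intro z
    rw [CP, Finset.prod_range_one, chainW]
    have e1 : extA z (0+1) = z 0 := extA_val z 0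
    have e2 : nb a z (0 + 1 - 1) = a := by rw [nb]; simp
    have e3 : nb a z (0 + 1 + 1) = 1 := by
      rw [nb, if_neg (by omega), extA_of_gt _ (by omega)]
    rw [e1, e2, e3, mul_one]
  rw [Finset.sum_congr rfl fun z _ => key z]
  rw [show (∑ z : Fin 1 → F, wt (z 0) (1 + a)) = ∑ b : F, wt b (1+a) from
    Fintype.sum_equiv (Equiv.funUnique (Fin 1) F) _ _ (fun z => rfl)]
  rw [sum_wt]
  congr 1
  rw [show ((1 + a = 0) = (a = -1)) from propext
    ⟨fun h => by linear_combination h, fun h => by rw [h]; ring⟩]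


open Classical in
lemma SC_rec (r : ℕ) (a : F) :
    SC F (r+2) a = (∑ b ∈ Finset.univ.erase (0:F), SC F (r+1) b) +
      (if a = 0 then 0 else Fintype.card F * SC F r (-a⁻¹)) := by
  classical
  rw [SC, sum_cons_split]
  have key : ∀ b : F, ∀ z : Fin (r+1) → F,
      CP a (Fin.cons b z) = wt b (1 + a * extA z 1) * CP b z := fun b z => CP_cons a b z
  rw [Finset.sum_congr rfl fun b _ => Finset.sum_congr rfl fun z _ => key b z]
  rw [← Finset.add_sum_erase Finset.univ _ (Finset.mem_univ (0:F))]
  have hnz : ∀ b ∈ Finset.univ.erase (0:F),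
      (∑ z : Fin (r+1) → F, wt b (1 + a * extA z 1) * CP b z) = SC F (r+1) b := by
    intro b hb
    rw [SC]
    refine Finset.sum_congr rfl fun z _ => ?_
    rw [wt, if_neg (Finset.mem_erase.1 hb).1, one_mul]
  rw [Finset.sum_congr rfl hnz, add_comm]
  congr 1
  -- zero branch
  rw [sum_cons_split]
  have key2 : ∀ c : F, ∀ z' : Fin r → F,
      wt (0:F) (1 + a * extA (Fin.cons c z') 1) * CP (0:F) (Fin.cons c z') =
      (if 1 + a * c = 0 then Fintype.card F else 0) * ((if c = 0 then 0 else 1) * CP c z') := by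
    intro c z'
    rw [extA_cons_one, CP_cons, wt, if_pos rfl, zero_mul, add_zero]
    have hw : wt c (1:F) = if c = 0 then 0 else 1 := by
      by_cases hc : c = 0
      · rw [wt, if_pos hc, if_neg one_ne_zero, if_pos hc]
      · rw [wt, if_neg hc, if_neg hc]
    rw [hw]
  rw [Finset.sum_congr rfl fun c _ => Finset.sum_congr rfl fun z' _ => key2 c z']
  by_cases ha : a = 0
  · rw [if_pos ha]
    refine Finset.sum_eq_zero fun c _ => Finset.sum_eq_zero fun z' _ => ?_
    rw [ha, zero_mul, add_zero, if_neg one_ne_zero, zero_mul]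
  · rw [if_neg ha]
    have hcond : ∀ c : F, (1 + a * c = 0) = (c = -a⁻¹) := by
      intro c
      refine propext ⟨fun h => ?_, fun h => ?_⟩
      · have h2 : a * c = -1 := by linear_combination h
        have h3 : a * (-a⁻¹) = -1 := by field_simp
        exact mul_left_cancel₀ ha (h2.trans h3.symm)
      · rw [h]
        field_simp
        norm_num
    have step : ∀ c : F, (∑ z' : Fin r → F,
        (if 1 + a * c = 0 then Fintype.card F else 0) * ((if c = 0 then 0 else 1) * CP c z')) =
        (if c = -a⁻¹ then Fintype.card F * ((if c = 0 then 0 else 1) * SC F r c) else 0) := by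
      intro c
      rw [hcond c]
      by_cases hc : c = -a⁻¹
      · rw [if_pos hc, if_pos hc, SC, Finset.mul_sum, Finset.mul_sum]
      · rw [if_neg hc, if_neg hc]
        exact Finset.sum_eq_zero fun z' _ => by rw [zero_mul]
    rw [Finset.sum_congr rfl fun c _ => step c]
    rw [Finset.sum_ite_eq' Finset.univ (-a⁻¹)
      (fun c => Fintype.card F * ((if c = 0 then 0 else 1) * SC F r c)), if_pos (Finset.mem_univ _)]
    have hninv : -a⁻¹ ≠ 0 := by
      simp only [ne_eq, neg_eq_zero, inv_eq_zero]
      exact ha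
    rw [if_neg hninv, one_mul]

/-- `C` sequence. -/
def Cseq (q : ℤ) (r : ℕ) : ℤ := if r % 2 = 1 then q^((r+1)/2) else 0

/-- `P` sequence. -/
def Pseq (q : ℤ) : ℕ → ℤ
  | 0 => 1
  | 1 => q - 1
  | (r+2) => (q-1) * Pseq q (r+1) + q * Pseq q r + Cseq q (r+1)

/-- `A` sequence. -/
def Aseq (q : ℤ) : ℕ → ℤ
  | 0 => 1
  | (r+1) => (q-1) * Pseq q r + Cseq q r

open Classical in
/-- closed form for `SC`. -/
noncomputable def CF (q : ℤ) (r : ℕ) (a : F) : ℤ :=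
  (if a = 0 then Aseq q r else Pseq q r) +
    (if r % 2 = 1 ∧ a = (-1:F)^((r+1)/2) then q^((r+1)/2) else 0)

lemma neg_one_pow_inv (e : ℕ) : ((-1:F)^e)⁻¹ = (-1)^e := by
  rcases Nat.even_or_odd e with he | he
  · rw [he.neg_one_pow, inv_one]
  · rw [he.neg_one_pow, inv_neg, inv_one]

lemma neg_one_pow_ne_zero' (e : ℕ) : ((-1:F)^e) ≠ 0 :=
  pow_ne_zero e (neg_ne_zero.2 one_ne_zero)

lemma inv_cond {a : F} (ha : a ≠ 0) (e : ℕ) : (-a⁻¹ = (-1:F)^e) = (a = (-1:F)^(e+1)) := by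
  refine propext ⟨fun h => ?_, fun h => ?_⟩
  · have h1 : a⁻¹ = (-1:F)^(e+1) := by
      rw [pow_succ, mul_neg_one]
      linear_combination -h
    rw [← inv_inv a, h1, neg_one_pow_inv]
  · rw [h, neg_one_pow_inv, pow_succ, mul_neg_one, neg_neg]

open Classical in
lemma sum_CF_erase (r : ℕ) :
    ∑ b ∈ Finset.univ.erase (0:F), CF (Fintype.card F) r b =
      ((Fintype.card F : ℤ) - 1) * Pseq (Fintype.card F) r + Cseq (Fintype.card F) r := by
  classical
  set q : ℤ := (Fintype.card F : ℤ)
  have h1 : ∀ b ∈ Finset.univ.erase (0:F), CF q r b =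
      Pseq q r + (if r % 2 = 1 ∧ b = (-1:F)^((r+1)/2) then q^((r+1)/2) else 0) := by
    intro b hb
    rw [CF, if_neg (Finset.mem_erase.1 hb).1]
  rw [Finset.sum_congr rfl h1, Finset.sum_add_distrib, Finset.sum_const,
    Finset.card_erase_of_mem (Finset.mem_univ _), Finset.card_univ]
  congr 1
  · rw [nsmul_eq_mul]
    congr 1
    have : (1:ℕ) ≤ Fintype.card F := Fintype.card_pos
    push_cast [Nat.cast_sub this]
    ring
  · by_cases hr : r % 2 = 1
    · have h2 : ∀ b ∈ Finset.univ.erase (0:F),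
          (if r % 2 = 1 ∧ b = (-1:F)^((r+1)/2) then q^((r+1)/2) else 0) =
          (if b = (-1:F)^((r+1)/2) then q^((r+1)/2) else 0) := by
        intro b _
        by_cases hb : b = (-1:F)^((r+1)/2)
        · rw [if_pos ⟨hr, hb⟩, if_pos hb]
        · rw [if_neg (fun hcon => hb hcon.2), if_neg hb]
      rw [Finset.sum_congr rfl h2, Finset.sum_ite_eq' _ ((-1:F)^((r+1)/2)),
        if_pos (Finset.mem_erase.2 ⟨neg_one_pow_ne_zero' _, Finset.mem_univ _⟩), Cseq, if_pos hr]
    · rw [Cseq, if_neg hr]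
      exact Finset.sum_eq_zero fun b _ => if_neg (fun hcon => hr hcon.1)

open Classical in
lemma SC_closed : ∀ r : ℕ, ∀ a : F, (SC F r a : ℤ) = CF (Fintype.card F) r a := by
  classical
  set q : ℤ := (Fintype.card F : ℤ) with hqdef
  have hq1 : (1:ℕ) ≤ Fintype.card F := Fintype.card_pos
  have base0 : ∀ a : F, (SC F 0 a : ℤ) = CF q 0 a := by
    intro a
    rw [SC_zero, CF]
    norm_num [Aseq, Pseq]
  have base1 : ∀ a : F, (SC F 1 a : ℤ) = CF q 1 a := by
    intro a
    rw [SC_one, CF]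
    have hA : Aseq q 1 = q - 1 := by
      rw [Aseq, Pseq, Cseq]
      norm_num
    have hP : Pseq q 1 = q - 1 := rfl
    have hfirst : (if a = 0 then Aseq q 1 else Pseq q 1) = q - 1 := by
      by_cases ha : a = 0 <;> simp [ha, hA, hP]
    rw [hfirst]
    have hpow : ((-1:F)^((1+1)/2)) = -1 := by norm_num
    have hsecond : (if 1 % 2 = 1 ∧ a = (-1:F)^((1+1)/2) then q^((1+1)/2) else 0) =
        (if a = -1 then q else 0) := by
      rw [hpow]
      norm_num
    rw [hsecond]
    push_cast [Nat.cast_sub hq1]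
    by_cases ha : a = -1 <;> simp [ha, hqdef]
  have H : ∀ r : ℕ, (∀ a : F, (SC F r a : ℤ) = CF q r a) ∧
      (∀ a : F, (SC F (r+1) a : ℤ) = CF q (r+1) a) := by
    intro r
    induction r with
    | zero => exact ⟨base0, base1⟩
    | succ k ih =>
      refine ⟨ih.2, ?_⟩
      intro a
      by_cases ha : a = 0
      · rw [show k + 1 + 1 = k + 2 from rfl, SC_rec k a, if_pos ha, add_zero]
        push_cast
        rw [Finset.sum_congr rfl (fun b _ => ih.2 b), sum_CF_erase (k+1), CF, if_pos ha]
        have hsec : (if (k+2) % 2 = 1 ∧ a = (-1:F)^((k+2+1)/2) then q^((k+2+1)/2) else 0) = 0 :=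
          if_neg (fun hcon => neg_one_pow_ne_zero' (F := F) ((k+2+1)/2) (ha ▸ hcon.2).symm)
        rw [hsec, add_zero]
        rfl
      · rw [show k + 1 + 1 = k + 2 from rfl, SC_rec k a, if_neg ha]
        push_cast
        rw [Finset.sum_congr rfl (fun b _ => ih.2 b), sum_CF_erase (k+1), ih.1 (-a⁻¹)]
        have hna : -a⁻¹ ≠ 0 := by
          simp only [ne_eq, neg_eq_zero, inv_eq_zero]
          exact ha
        rw [CF, if_neg hna, CF, if_neg ha]
        have hind : q * (if k % 2 = 1 ∧ -a⁻¹ = (-1:F)^((k+1)/2) then q^((k+1)/2) else 0) =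
            (if (k+2) % 2 = 1 ∧ a = (-1:F)^((k+2+1)/2) then q^((k+2+1)/2) else 0) := by
          have e1 : (k+2+1)/2 = (k+1)/2 + 1 := by omega
          have e2 : ((k+2) % 2 = 1) = (k % 2 = 1) := by rw [Nat.add_mod_right]
          simp only [e1, e2, inv_cond ha ((k+1)/2)]
          by_cases hc : k % 2 = 1 ∧ a = (-1:F)^((k+1)/2+1)
          · rw [if_pos hc, if_pos hc, pow_succ]
            ring
          · rw [if_neg hc, if_neg hc, mul_zero]
        have hP2 : Pseq q (k+2) = (q-1) * Pseq q (k+1) + q * Pseq q k + Cseq q (k+1) := rfl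
        rw [mul_add, hind, hP2]
        ring
  exact fun r => (H r).1

lemma Cseq_odd (q : ℤ) (s : ℕ) : Cseq q (2*s+1) = q^(s+1) := by
  rw [Cseq, if_pos (by omega)]
  congr 1
  omega

lemma Cseq_even (q : ℤ) (s : ℕ) : Cseq q (2*s) = 0 := by
  rw [Cseq, if_neg (by omega)]

lemma Pseq_closed (q : ℤ) : ∀ s : ℕ, (q^2 - 1) * Pseq q (2*s) = q^(2*s+2) - 1 ∧
    (q^2 - 1) * Pseq q (2*s+1) = (q^(s+2) - 1) * (q^(s+1) - 1) := by
  intro s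
  induction s with
  | zero =>
    constructor
    · show (q^2-1) * Pseq q 0 = _
      rw [show Pseq q 0 = 1 from rfl]
      ring
    · show (q^2-1) * Pseq q 1 = _
      rw [show Pseq q 1 = q - 1 from rfl]
      ring
  | succ s ih =>
    have e2 : 2 * (s + 1) = (2*s) + 2 := by ring
    have e3 : 2 * (s + 1) + 1 = (2*s+1) + 2 := by ring
    have hP2 : Pseq q ((2*s)+2) = (q-1) * Pseq q (2*s+1) + q * Pseq q (2*s) + Cseq q (2*s+1) := rfl
    have hP3 : Pseq q ((2*s+1)+2) = (q-1) * Pseq q ((2*s)+2) + q * Pseq q (2*s+1) +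
        Cseq q (2*s+2) := rfl
    have hC0 : Cseq q (2*s+2) = 0 := by
      rw [show 2*s+2 = 2*(s+1) from by ring, Cseq_even]
    have h1 : (q^2 - 1) * Pseq q ((2*s)+2) = q^(2*(s+1)+2) - 1 := by
      rw [hP2, Cseq_odd]
      linear_combination (q-1) * ih.2 + q * ih.1
    refine ⟨by rw [e2]; exact h1, ?_⟩
    rw [e3, hP3, hC0]
    linear_combination (q-1) * h1 + q * ih.2

open Classical in
lemma wt_one' (c : F) : wt c (1:F) = if c = 0 then 0 else 1 := by
  by_cases hc : c = 0
  · rw [wt, if_pos hc, if_neg one_ne_zero, if_pos hc]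
  · rw [wt, if_neg hc, if_neg hc]

open Classical in
lemma wt_zero' (c : F) : wt (0:F) c = if c = 0 then Fintype.card F else 0 := by
  rw [wt, if_pos rfl]

lemma wt_ne (b c : F) (hb : b ≠ 0) : wt b c = 1 := by
  rw [wt, if_neg hb]

lemma one_add_mul_eq_zero_iff {a : F} (c : F) (ha : a ≠ 0) : (1 + a * c = 0) = (c = -a⁻¹) := by
  refine propext ⟨fun h => ?_, fun h => ?_⟩
  · have h2 : a * c = -1 := by linear_combination h
    have h3 : a * (-a⁻¹) = -1 := by field_simp
    exact mul_left_cancel₀ ha (h2.trans h3.symm)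
  · rw [h]
    field_simp
    norm_num

open Classical in
lemma sum_wt_one_mul (h : F → ℕ) :
    ∑ c : F, wt c (1:F) * h c = ∑ c ∈ Finset.univ.erase (0:F), h c := by
  classical
  rw [← Finset.add_sum_erase Finset.univ _ (Finset.mem_univ (0:F))]
  rw [wt_one', if_pos rfl, zero_mul, zero_add]
  exact Finset.sum_congr rfl fun c hc => by
    rw [wt_one', if_neg (Finset.mem_erase.1 hc).1, one_mul]

open Classical in
lemma sum_wt_lin {γ : F} (hγ : γ ≠ 0) (t : F) :
    ∑ b : F, wt b (1 + γ * t) =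
      (Fintype.card F - 1) + (if t = -γ⁻¹ then Fintype.card F else 0) := by
  rw [sum_wt]
  congr 1
  rw [one_add_mul_eq_zero_iff t hγ]

open Classical in
lemma g_eval {u : F} (x : Unit) :
    (∑ x₁ : F, wt x₁ (1:F) * ∑ x₂ : F, wt x₂ (1:F) * wt (0:F) (1 + x₁*x₂*u)) =
      if u = 0 then 0 else (Fintype.card F - 1) * Fintype.card F := by
  classical
  by_cases hu : u = 0
  · rw [if_pos hu]
    refine Finset.sum_eq_zero fun x₁ _ => ?_
    have : (∑ x₂ : F, wt x₂ (1:F) * wt (0:F) (1 + x₁*x₂*u)) = 0 := by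
      refine Finset.sum_eq_zero fun x₂ _ => ?_
      rw [hu, mul_zero, add_zero, wt_zero', if_neg one_ne_zero, mul_zero]
    rw [this, mul_zero]
  · rw [if_neg hu, sum_wt_one_mul]
    have hx : ∀ x₁ ∈ Finset.univ.erase (0:F),
        (∑ x₂ : F, wt x₂ (1:F) * wt (0:F) (1 + x₁*x₂*u)) = Fintype.card F := by
      intro x₁ hx₁
      have hx₁0 : x₁ ≠ 0 := (Finset.mem_erase.1 hx₁).1
      rw [sum_wt_one_mul]
      have hux : x₁ * u ≠ 0 := mul_ne_zero hx₁0 hu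
      have hpt : ∀ x₂ : F, wt (0:F) (1 + x₁*x₂*u) =
          if x₂ = -(x₁*u)⁻¹ then Fintype.card F else 0 := by
        intro x₂
        rw [wt_zero', show (1 + x₁*x₂*u) = 1 + (x₁*u)*x₂ from by ring,
          one_add_mul_eq_zero_iff x₂ hux]
      rw [Finset.sum_congr rfl fun x₂ _ => hpt x₂,
        Finset.sum_ite_eq' _ (-(x₁*u)⁻¹)]
      rw [if_pos (Finset.mem_erase.2 ⟨by simp [hu, hx₁0], Finset.mem_univ _⟩)]
    rw [Finset.sum_congr rfl hx, Finset.sum_const, smul_eq_mul,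
      Finset.card_erase_of_mem (Finset.mem_univ _), Finset.card_univ]

open Classical in
lemma prod_eval (m : ℕ) (α β : F) (x₁ x₂ t : F) (z : Fin (m+1) → F) :
    (∏ k ∈ Finset.range (m+4),
      wt (extA (Fin.cons x₁ (Fin.cons x₂ (Fin.cons t z)) : Fin (m+4) → F) (k+1))
        (rhs α β (Fin.cons x₁ (Fin.cons x₂ (Fin.cons t z)) : Fin (m+4) → F) (k+1))) =
    (wt x₁ (1 + α*t) * wt x₂ (1 + β*t)) * (wt t (1 + x₁*x₂*extA z 1) * CP t z) := by
  set x : Fin (m+4) → F := (Fin.cons x₁ (Fin.cons x₂ (Fin.cons t z)) : Fin (m+4) → F) with hx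
  have A1 : extA x 1 = x₁ := extA_cons_one _ _
  have A2 : extA x 2 = x₂ := by
    rw [hx]
    show extA (Fin.cons x₁ (Fin.cons x₂ (Fin.cons t z))) (1+1) = x₂
    rw [extA_cons _ _ le_rfl, extA_cons_one]
  have A3 : extA x 3 = t := by
    rw [hx]
    show extA (Fin.cons x₁ (Fin.cons x₂ (Fin.cons t z))) (2+1) = t
    rw [extA_cons _ _ (by omega)]
    show extA (Fin.cons x₂ (Fin.cons t z)) (1+1) = t
    rw [extA_cons _ _ le_rfl, extA_cons_one]
  have A4 : extA x 4 = extA z 1 := by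
    rw [hx]
    show extA (Fin.cons x₁ (Fin.cons x₂ (Fin.cons t z))) (3+1) = extA z 1
    rw [extA_cons _ _ (by omega)]
    show extA (Fin.cons x₂ (Fin.cons t z)) (2+1) = extA z 1
    rw [extA_cons _ _ (by omega)]
    show extA (Fin.cons t z) (1+1) = extA z 1
    rw [extA_cons _ _ le_rfl]
  have Achain : ∀ j : ℕ, extA x (j+4) = extA z (j+1) := by
    intro j
    rw [hx]
    show extA (Fin.cons x₁ (Fin.cons x₂ (Fin.cons t z))) ((j+3)+1) = extA z (j+1)
    rw [extA_cons _ _ (by omega)]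
    show extA (Fin.cons x₂ (Fin.cons t z)) ((j+2)+1) = extA z (j+1)
    rw [extA_cons _ _ (by omega)]
    show extA (Fin.cons t z) ((j+1)+1) = extA z (j+1)
    rw [extA_cons _ _ (by omega)]
  have Aleft : ∀ j : ℕ, extA x (j+3) = nb t z j := by
    intro j
    match j with
    | 0 =>
      simp only [show (0:ℕ)+3 = 3 from rfl]
      rw [A3, nb, if_pos rfl]
    | Nat.succ j =>
      simp only [show j+1+3 = j+4 from rfl]
      rw [Achain j, nb, if_neg (by omega)]
  have Aright : ∀ j : ℕ, extA x (j+5) = nb t z (j+2) := by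
    intro j
    have h := Achain (j+1)
    simp only [show j+1+4 = j+5 from rfl, show j+1+1 = j+2 from rfl] at h
    rw [h, nb, if_neg (by omega)]
  have hr1 : rhs α β x 1 = 1 + α * t := by rw [rhs, if_pos rfl, A3]
  have hr2 : rhs α β x 2 = 1 + β * t := by
    rw [rhs, if_neg (by omega), if_pos rfl, A3]
  have hr3 : rhs α β x 3 = 1 + x₁ * x₂ * extA z 1 := by
    rw [rhs, if_neg (by omega), if_neg (by omega), if_pos rfl, A1, A2, A4]
  have hr4 : ∀ j : ℕ, rhs α β x (j+4) = 1 + extA x (j+3) * extA x (j+5) := by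
    intro j
    rw [rhs, if_neg (by omega), if_neg (by omega), if_neg (by omega)]
    simp only [show j+4-1 = j+3 from rfl, show j+4+1 = j+5 from rfl]
  rw [Finset.prod_range_succ', Finset.prod_range_succ', Finset.prod_range_succ']
  simp only [show ∀ j : ℕ, j+1+1+1+1 = j+4 from fun _ => rfl, show (0:ℕ)+1 = 1 from rfl,
    show (0:ℕ)+1+1 = 2 from rfl, show (0:ℕ)+1+1+1 = 3 from rfl]
  have hterm : ∀ j ∈ Finset.range (m+1),
      wt (extA x (j+4)) (rhs α β x (j+4)) = chainW t z (j+1) := by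
    intro j _
    rw [hr4 j, Achain j, Aleft j, Aright j, chainW]
    simp only [Nat.add_sub_cancel, show j+1+1 = j+2 from rfl]
  rw [Finset.prod_congr rfl hterm, hr1, hr2, hr3, A1, A2, A3, CP]
  ring

open Classical in
lemma ND_split (m : ℕ) (α β : F) :
    ND F (m+4) α β = ∑ x₁ : F, ∑ x₂ : F, ∑ t : F, ∑ z : Fin (m+1) → F,
      (wt x₁ (1 + α*t) * wt x₂ (1 + β*t)) * (wt t (1 + x₁*x₂*extA z 1) * CP t z) := by
  rw [ND_eq_sum, sum_cons_split]
  refine Finset.sum_congr rfl fun x₁ _ => ?_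
  rw [sum_cons_split]
  refine Finset.sum_congr rfl fun x₂ _ => ?_
  rw [sum_cons_split]
  refine Finset.sum_congr rfl fun t _ => ?_
  refine Finset.sum_congr rfl fun z _ => ?_
  exact prod_eval m α β x₁ x₂ t z

open Classical in
lemma G0_eval (m : ℕ) (α β : F) :
    (∑ x₁ : F, ∑ x₂ : F, ∑ z : Fin (m+1) → F,
      (wt x₁ (1 + α*(0:F)) * wt x₂ (1 + β*(0:F))) *
        (wt (0:F) (1 + x₁*x₂*extA z 1) * CP (0:F) z))
    = (Fintype.card F - 1) * Fintype.card F * ∑ u ∈ Finset.univ.erase (0:F), SC F m u := by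
  classical
  have hz : ∀ x₁ x₂ : F, (∑ z : Fin (m+1) → F,
      (wt x₁ (1 + α*(0:F)) * wt x₂ (1 + β*(0:F))) *
        (wt (0:F) (1 + x₁*x₂*extA z 1) * CP (0:F) z))
      = ∑ u : F, (wt x₁ 1 * wt x₂ 1) * ((wt (0:F) (1+x₁*x₂*u) * wt u 1) * SC F m u) := by
    intro x₁ x₂
    rw [sum_cons_split]
    refine Finset.sum_congr rfl fun u _ => ?_
    have hpt : ∀ z' : Fin m → F,
        (wt x₁ (1 + α*(0:F)) * wt x₂ (1 + β*(0:F))) *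
          (wt (0:F) (1 + x₁*x₂*extA (Fin.cons u z') 1) * CP (0:F) (Fin.cons u z'))
        = ((wt x₁ 1 * wt x₂ 1) * (wt (0:F) (1+x₁*x₂*u) * wt u 1)) * CP u z' := by
      intro z'
      rw [extA_cons_one, CP_cons]
      simp only [mul_zero, add_zero, zero_mul]
      ring
    rw [Finset.sum_congr rfl fun z' _ => hpt z', ← Finset.mul_sum, ← SC]
    ring
  rw [Finset.sum_congr rfl fun x₁ _ => Finset.sum_congr rfl fun x₂ _ => hz x₁ x₂]
  rw [Finset.sum_congr rfl fun x₁ _ => Finset.sum_comm, Finset.sum_comm]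
  have hu : ∀ u : F, (∑ x₁ : F, ∑ x₂ : F,
      (wt x₁ 1 * wt x₂ 1) * ((wt (0:F) (1+x₁*x₂*u) * wt u 1) * SC F m u))
      = (wt u 1 * SC F m u) *
        (∑ x₁ : F, wt x₁ (1:F) * ∑ x₂ : F, wt x₂ (1:F) * wt (0:F) (1 + x₁*x₂*u)) := by
    intro u
    simp only [Finset.mul_sum]
    refine Finset.sum_congr rfl fun x₁ _ => Finset.sum_congr rfl fun x₂ _ => by ring
  rw [Finset.sum_congr rfl fun u _ => hu u]
  rw [Finset.sum_congr rfl fun u _ => by rw [g_eval ()]]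
  rw [← Finset.add_sum_erase Finset.univ _ (Finset.mem_univ (0:F))]
  rw [if_pos rfl, mul_zero, zero_add]
  have hfin : ∀ u ∈ Finset.univ.erase (0:F),
      (wt u 1 * SC F m u) * (if u = 0 then 0 else (Fintype.card F - 1) * Fintype.card F)
      = SC F m u * ((Fintype.card F - 1) * Fintype.card F) := by
    intro u hu'
    have h0 := (Finset.mem_erase.1 hu').1
    rw [if_neg h0, wt_one', if_neg h0, one_mul]
  rw [Finset.sum_congr rfl hfin, ← Finset.sum_mul]
  ring

open Classical in
lemma ND_value (m : ℕ) (α β : F) (hα : α ≠ 0) (hβ : β ≠ 0) :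
    ND F (m+4) α β =
      (∑ t ∈ Finset.univ.erase (0:F),
        (((Fintype.card F - 1) + if t = -α⁻¹ then Fintype.card F else 0) *
         ((Fintype.card F - 1) + if t = -β⁻¹ then Fintype.card F else 0)) * SC F (m+1) t)
      + (Fintype.card F - 1) * Fintype.card F * ∑ u ∈ Finset.univ.erase (0:F), SC F m u := by
  classical
  rw [ND_split]
  rw [Finset.sum_congr rfl fun x₁ _ => Finset.sum_comm, Finset.sum_comm]
  rw [← Finset.add_sum_erase Finset.univ _ (Finset.mem_univ (0:F))]
  rw [add_comm]
  congr 1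
  · refine Finset.sum_congr rfl fun t ht => ?_
    have ht0 := (Finset.mem_erase.1 ht).1
    have h1 : ∀ x₁ x₂ : F, (∑ z : Fin (m+1) → F,
        (wt x₁ (1+α*t) * wt x₂ (1+β*t)) * (wt t (1+x₁*x₂*extA z 1) * CP t z))
        = (wt x₁ (1+α*t) * wt x₂ (1+β*t)) * SC F (m+1) t := by
      intro x₁ x₂
      rw [← Finset.mul_sum]
      congr 1
      rw [SC]
      refine Finset.sum_congr rfl fun z _ => ?_
      rw [wt_ne _ _ ht0, one_mul]
    rw [Finset.sum_congr rfl fun x₁ _ => Finset.sum_congr rfl fun x₂ _ => h1 x₁ x₂]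
    have h2 : (∑ x₁ : F, ∑ x₂ : F, (wt x₁ (1+α*t) * wt x₂ (1+β*t)) * SC F (m+1) t)
        = ((∑ x₁ : F, wt x₁ (1+α*t)) * (∑ x₂ : F, wt x₂ (1+β*t))) * SC F (m+1) t := by
      rw [Finset.sum_mul_sum]
      simp only [Finset.sum_mul]
    rw [h2, sum_wt_lin hα t, sum_wt_lin hβ t]
  · exact G0_eval m α β

end Chain

theorem stmt_15 (F : Type*) [Field F] [Fintype F] (n : ℕ) (hn : 4 ≤ n) (heven : Even n)
    (α β : F) (hα : α ≠ 0) (hβ : β ≠ 0) (hαβ : α ≠ β)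
    (hα' : α ≠ (-1) ^ (n / 2)) (hβ' : β ≠ (-1) ^ (n / 2)) :
    (ND F n α β : ℤ) = ((Fintype.card F : ℤ) ^ (n / 2) - 1) ^ 2 := by
  classical
  obtain ⟨m, rfl⟩ : ∃ m, n = m + 4 := ⟨n - 4, by omega⟩
  obtain ⟨s, rfl⟩ : ∃ s, m = 2 * s := by
    rcases heven with ⟨u, hu⟩
    exact ⟨u - 2, by omega⟩
  set q : ℤ := (Fintype.card F : ℤ) with hq
  have hq2 : 2 ≤ Fintype.card F := Fintype.one_lt_card
  have hq1 : 1 ≤ Fintype.card F := by omega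
  have hq2' : (2:ℤ) ≤ q := by rw [hq]; exact_mod_cast hq2
  have hdiv : (2*s+4)/2 = s + 2 := by omega
  rw [hdiv] at hα' hβ' ⊢
  set P1 : ℤ := Pseq q (2*s+1) with hP1def
  set P0 : ℤ := Pseq q (2*s) with hP0def
  set eps : F := (-1:F)^(s+1) with heps
  -- SC values
  have hSC1 : ∀ t ∈ Finset.univ.erase (0:F),
      (SC F (2*s+1) t : ℤ) = P1 + (if t = eps then q^(s+1) else 0) := by
    intro t ht
    rw [SC_closed (2*s+1) t, CF, if_neg (Finset.mem_erase.1 ht).1]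
    have hidx : (2*s+1+1)/2 = s+1 := by omega
    have hmod : ((2*s+1) % 2 = 1 ∧ t = (-1:F)^(s+1)) = (t = (-1:F)^(s+1)) :=
      propext (and_iff_right (by omega))
    simp only [hidx, hmod, heps, hP1def, hq]
  have hSC0 : (∑ u ∈ Finset.univ.erase (0:F), ((SC F (2*s) u : ℤ))) = (q-1) * P0 := by
    rw [Finset.sum_congr rfl fun u _ => SC_closed (2*s) u, sum_CF_erase (2*s),
      Cseq_even, add_zero]
  -- distinctness
  have hd1 : -α⁻¹ ≠ -β⁻¹ := fun h => hαβ (by rwa [neg_inj, inv_inj] at h)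
  have hd2 : -α⁻¹ ≠ eps := by
    intro h
    rw [heps, inv_cond hα (s+1)] at h
    exact hα' h
  have hd3 : -β⁻¹ ≠ eps := by
    intro h
    rw [heps, inv_cond hβ (s+1)] at h
    exact hβ' h
  -- expansion
  have hexp : ∀ t : F,
      ((q-1) + if t = -α⁻¹ then q else 0) * ((q-1) + if t = -β⁻¹ then q else 0) *
        (P1 + if t = eps then q^(s+1) else 0)
      = ((q-1)*(q-1)*P1) + ((if t = -α⁻¹ then (q-1)*q*P1 else 0) +
          ((if t = -β⁻¹ then (q-1)*q*P1 else 0) +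
            (if t = eps then (q-1)*(q-1)*q^(s+1) else 0))) := by
    intro t
    by_cases h1 : t = -α⁻¹
    · by_cases h2 : t = -β⁻¹
      · exact absurd (h1.symm.trans h2) hd1
      · by_cases h3 : t = eps
        · exact absurd (h1.symm.trans h3) hd2
        · rw [if_pos h1, if_pos h1, if_neg h2, if_neg h2, if_neg h3, if_neg h3]
          ring
    · by_cases h2 : t = -β⁻¹
      · by_cases h3 : t = eps
        · exact absurd (h2.symm.trans h3) hd3
        · rw [if_neg h1, if_neg h1, if_pos h2, if_pos h2, if_neg h3, if_neg h3]
          ring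
      · by_cases h3 : t = eps
        · rw [if_neg h1, if_neg h1, if_neg h2, if_neg h2, if_pos h3, if_pos h3]
          ring
        · rw [if_neg h1, if_neg h1, if_neg h2, if_neg h2, if_neg h3, if_neg h3]
          ring
  -- main computation
  rw [ND_value (2*s) α β hα hβ]
  push_cast [Nat.cast_sub hq1]
  have hsum1 : ∀ t ∈ Finset.univ.erase (0:F),
      ((q - 1) + if t = -α⁻¹ then q else 0) * ((q - 1) + if t = -β⁻¹ then q else 0) *
        ((SC F (2*s+1) t : ℕ) : ℤ)
      = ((q-1)*(q-1)*P1) + ((if t = -α⁻¹ then (q-1)*q*P1 else 0) +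
          ((if t = -β⁻¹ then (q-1)*q*P1 else 0) +
            (if t = eps then (q-1)*(q-1)*q^(s+1) else 0))) := by
    intro t ht
    rw [hSC1 t ht]
    exact hexp t
  rw [Finset.sum_congr rfl hsum1]
  rw [Finset.sum_add_distrib, Finset.sum_add_distrib, Finset.sum_add_distrib,
    Finset.sum_const, Finset.card_erase_of_mem (Finset.mem_univ _), Finset.card_univ,
    Finset.sum_ite_eq' _ (-α⁻¹), Finset.sum_ite_eq' _ (-β⁻¹), Finset.sum_ite_eq' _ eps,
    if_pos (Finset.mem_erase.2 ⟨by simp [hα], Finset.mem_univ _⟩),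
    if_pos (Finset.mem_erase.2 ⟨by simp [hβ], Finset.mem_univ _⟩),
    if_pos (Finset.mem_erase.2 ⟨by rw [heps]; exact neg_one_pow_ne_zero' _, Finset.mem_univ _⟩),
    hSC0, nsmul_eq_mul]
  push_cast [Nat.cast_sub hq1]
  -- final algebra
  have hP0c : (q^2 - 1) * P0 = q^(2*s+2) - 1 := (Pseq_closed q s).1
  have hP1c : (q^2 - 1) * P1 = (q^(s+2) - 1) * (q^(s+1) - 1) := (Pseq_closed q s).2
  have hc : (q^2 - 1) ≠ 0 := by nlinarith
  apply mul_left_cancel₀ hc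
  linear_combination ((q-1)*(q-1)*(q-1) + 2*(q-1)*q) * hP1c + (q-1)*(q-1)*q * hP0c
end
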